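/- Let P be a 2-dimensional affine plane in ℝ³ with its induced surface (2-dimensional Hausdorff) measure dS. Let 0 < a < 2, 0 < b < 2, and a + b > 2. Then there exists a constant C, depending only on a and b (independent of ξ and P), such that for every nonzero ξ ∈ ℝ³, ∫_P |ξ − η|^{−a} |η|^{−b} dS(η) ≤ C |ξ|^{−(a+b−2)}. -/

import Mathlib

open MeasureTheory Metric Set
open scoped ENNReal NNReal

noncomputable section PlaneKernelAux

lemma finrank_E2 : Module.finrank ℝ (EuclideanSpace ℝ (Fin 2)) = 2 := by
  simp [finrank_euclideanSpace]

lemma scale_translate (h : (EuclideanSpace ℝ (Fin 2)) → ℝ≥0∞) (hm : Measurable h)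
    {R : ℝ} (hR : 0 < R) (c : EuclideanSpace ℝ (Fin 2)) :
    ∫⁻ w, h (R⁻¹ • (w - c)) ∂volume = ENNReal.ofReal (R ^ 2) * ∫⁻ v, h v ∂volume := by
  have hsm : Measurable fun x : EuclideanSpace ℝ (Fin 2) => R⁻¹ • x :=
    measurable_const_smul _
  have h1 : ∫⁻ w, h (R⁻¹ • (w - c)) ∂(volume : Measure (EuclideanSpace ℝ (Fin 2)))
      = ∫⁻ x, h (R⁻¹ • x) ∂(volume : Measure (EuclideanSpace ℝ (Fin 2))) := by
    have := (measurePreserving_add_right (volume : Measure (EuclideanSpace ℝ (Fin 2))) c).lintegral_comp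
      (f := fun x => h (R⁻¹ • (x - c))) (hm.comp (hsm.comp (measurable_id.sub measurable_const)))
    simpa using this.symm
  have hmap := MeasureTheory.Measure.map_addHaar_smul (volume : Measure (EuclideanSpace ℝ (Fin 2)))
    (r := R⁻¹) (by positivity)
  have h2 : ∫⁻ x, h (R⁻¹ • x) ∂(volume : Measure (EuclideanSpace ℝ (Fin 2)))
      = ∫⁻ y, h y ∂(Measure.map (fun x : EuclideanSpace ℝ (Fin 2) => R⁻¹ • x) volume) := by
    rw [lintegral_map hm hsm]
  rw [h1, h2, hmap, lintegral_smul_measure]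
  congr 2
  rw [finrank_E2, inv_pow, inv_inv, abs_of_nonneg (by positivity)]

lemma rescale_lintegral {t R : ℝ} (hR : 0 < R) (c : EuclideanSpace ℝ (Fin 2))
    (Z : Set (EuclideanSpace ℝ (Fin 2))) (hZ : MeasurableSet Z) :
    ∫⁻ w in (fun w => R⁻¹ • (w - c)) ⁻¹' Z, ENNReal.ofReal (‖w - c‖ ^ (-t)) ∂volume
      = ENNReal.ofReal (R ^ (2 - t)) * ∫⁻ v in Z, ENNReal.ofReal (‖v‖ ^ (-t)) ∂volume := by
  set g : EuclideanSpace ℝ (Fin 2) → ℝ≥0∞ := fun v => ENNReal.ofReal (‖v‖ ^ (-t)) with hg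
  have hgm : Measurable g := by fun_prop
  set h : EuclideanSpace ℝ (Fin 2) → ℝ≥0∞ := Z.indicator g with hh
  have hhm : Measurable h := hgm.indicator hZ
  have hφ : Measurable fun w : EuclideanSpace ℝ (Fin 2) => R⁻¹ • (w - c) :=
    (measurable_const_smul _).comp (measurable_id.sub measurable_const)
  have hpre : MeasurableSet ((fun w : EuclideanSpace ℝ (Fin 2) => R⁻¹ • (w - c)) ⁻¹' Z) :=
    hφ hZ
  have key : ∀ w : EuclideanSpace ℝ (Fin 2),
      ((fun w : EuclideanSpace ℝ (Fin 2) => R⁻¹ • (w - c)) ⁻¹' Z).indicator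
        (fun w => ENNReal.ofReal (‖w - c‖ ^ (-t))) w
      = ENNReal.ofReal (R ^ (-t)) * h (R⁻¹ • (w - c)) := by
    intro w
    have hnorm : ‖R⁻¹ • (w - c)‖ = ‖w - c‖ / R := by
      rw [norm_smul, Real.norm_eq_abs, abs_inv, abs_of_pos hR, div_eq_inv_mul]
    by_cases hw : R⁻¹ • (w - c) ∈ Z
    · rw [indicator_of_mem (by exact hw), hh, indicator_of_mem hw, hg]
      beta_reduce
      rw [hnorm]
      rw [← ENNReal.ofReal_mul (by positivity)]
      congr 1
      rw [Real.div_rpow (norm_nonneg _) hR.le, div_eq_mul_inv, ← mul_assoc, mul_comm (R ^ (-t)),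
        mul_assoc, mul_inv_cancel₀ (Real.rpow_pos_of_pos hR _).ne', mul_one]
    · rw [indicator_of_notMem (by exact hw), hh, indicator_of_notMem hw, mul_zero]
  rw [← lintegral_indicator hpre, ← lintegral_indicator hZ]
  calc ∫⁻ w, ((fun w : EuclideanSpace ℝ (Fin 2) => R⁻¹ • (w - c)) ⁻¹' Z).indicator
        (fun w => ENNReal.ofReal (‖w - c‖ ^ (-t))) w ∂volume
      = ∫⁻ w, ENNReal.ofReal (R ^ (-t)) * h (R⁻¹ • (w - c)) ∂volume := by
        simp_rw [key]
    _ = ENNReal.ofReal (R ^ (-t)) * ∫⁻ w, h (R⁻¹ • (w - c)) ∂volume :=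
        lintegral_const_mul _ (hhm.comp hφ)
    _ = ENNReal.ofReal (R ^ (-t)) * (ENNReal.ofReal (R ^ 2) * ∫⁻ v, h v ∂volume) := by
        rw [scale_translate h hhm hR c]
    _ = ENNReal.ofReal (R ^ (2 - t)) * ∫⁻ v, h v ∂volume := by
        rw [← mul_assoc, ← ENNReal.ofReal_mul (by positivity)]
        congr 2
        rw [← Real.rpow_natCast R 2, ← Real.rpow_add hR]
        norm_num
        congr 1
        ring

lemma preimage_cb (R : ℝ) (hR : 0 < R) (c : EuclideanSpace ℝ (Fin 2)) :
    (fun w : EuclideanSpace ℝ (Fin 2) => R⁻¹ • (w - c)) ⁻¹' (closedBall 0 1) = closedBall c R := by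
  ext w
  simp only [mem_preimage, mem_closedBall_zero_iff, mem_closedBall, dist_eq_norm, sub_zero]
  rw [norm_smul, Real.norm_eq_abs, abs_inv, abs_of_pos hR, ← div_eq_inv_mul, div_le_one hR]

lemma ballBound {t : ℝ} {R : ℝ} (hR : 0 < R) (c : EuclideanSpace ℝ (Fin 2)) :
    ∫⁻ w in closedBall c R, ENNReal.ofReal (‖w - c‖ ^ (-t)) ∂volume
      = ENNReal.ofReal (R ^ (2 - t)) *
        ∫⁻ v in closedBall (0 : EuclideanSpace ℝ (Fin 2)) 1, ENNReal.ofReal (‖v‖ ^ (-t)) ∂volume := by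
  rw [← preimage_cb R hR c]
  exact rescale_lintegral hR c _ measurableSet_closedBall

lemma tailBound {t : ℝ} {R : ℝ} (hR : 0 < R) (c : EuclideanSpace ℝ (Fin 2)) :
    ∫⁻ w in (closedBall c R)ᶜ, ENNReal.ofReal (‖w - c‖ ^ (-t)) ∂volume
      = ENNReal.ofReal (R ^ (2 - t)) *
        ∫⁻ v in (closedBall (0 : EuclideanSpace ℝ (Fin 2)) 1)ᶜ, ENNReal.ofReal (‖v‖ ^ (-t)) ∂volume := by
  rw [← preimage_cb R hR c, ← preimage_compl]
  exact rescale_lintegral hR c _ measurableSet_closedBall.compl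

lemma J_lt_top {t : ℝ} (ht : 0 < t) (ht2 : t < 2) :
    ∫⁻ v in closedBall (0 : EuclideanSpace ℝ (Fin 2)) 1,
      ENNReal.ofReal (‖v‖ ^ (-t)) ∂volume < ⊤ := by
  set E := EuclideanSpace ℝ (Fin 2)
  set r : ℕ → ℝ := fun n => (2:ℝ)⁻¹ ^ n with hr
  have hrpos : ∀ n, 0 < r n := fun n => by positivity
  set S : ℕ → Set E := fun n => closedBall 0 (r n) \ ball 0 (r (n+1)) with hS
  have hcover : closedBall (0:E) 1 ⊆ {0} ∪ ⋃ n, S n := by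
    intro v hv
    rcases eq_or_ne v 0 with rfl | hv0
    · exact Or.inl rfl
    right
    have hvpos : 0 < ‖v‖ := norm_pos_iff.2 hv0
    have hexists : ∃ n, r n < ‖v‖ :=
      exists_pow_lt_of_lt_one hvpos (by norm_num : (2:ℝ)⁻¹ < 1)
    classical
    have hm1 : r (Nat.find hexists) < ‖v‖ := Nat.find_spec hexists
    have hmne : Nat.find hexists ≠ 0 := by
      intro h
      have h1 : r 0 = 1 := by simp [hr]
      rw [h, h1] at hm1
      exact absurd (mem_closedBall_zero_iff.1 hv) (not_le.2 hm1)
    rcases Nat.exists_eq_succ_of_ne_zero hmne with ⟨n, hn⟩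
    have hnmin : ¬ r n < ‖v‖ := Nat.find_min hexists (by omega)
    rw [hn] at hm1
    refine mem_iUnion.2 ⟨n, ?_, ?_⟩
    · exact mem_closedBall_zero_iff.2 (not_lt.1 hnmin)
    · simp only [mem_ball_zero_iff, not_lt]
      exact hm1.le
  set f : E → ℝ≥0∞ := fun v => ENNReal.ofReal (‖v‖ ^ (-t)) with hf
  have step1 : ∫⁻ v in closedBall (0:E) 1, f v ∂volume
      ≤ ∫⁻ v in {0} ∪ ⋃ n, S n, f v ∂volume := lintegral_mono_set hcover
  have step2 : ∫⁻ v in ({0} : Set E) ∪ ⋃ n, S n, f v ∂volume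
      ≤ (∫⁻ v in ({0} : Set E), f v ∂volume) + ∫⁻ v in ⋃ n, S n, f v ∂volume :=
    lintegral_union_le _ _ _
  have h0 : ∫⁻ v in ({0} : Set E), f v ∂volume = 0 := by
    rw [setLIntegral_measure_zero _ _ (measure_singleton _)]
  have step3 : ∫⁻ v in ⋃ n, S n, f v ∂volume ≤ ∑' n, ∫⁻ v in S n, f v ∂volume :=
    lintegral_iUnion_le _ _
  set V := volume (ball (0:E) 1) with hV
  have hVfin : V < ⊤ := measure_ball_lt_top
  have h2 : ∀ m : ℕ, r m = (2:ℝ) ^ (-(m:ℝ)) := by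
    intro m
    rw [Real.rpow_neg (by norm_num : (0:ℝ) ≤ 2), Real.rpow_natCast, ← inv_pow]
  have hshell : ∀ n, ∫⁻ v in S n, f v ∂volume
      ≤ ENNReal.ofReal ((2:ℝ) ^ t * ((2:ℝ) ^ (t - 2)) ^ n) * V := by
    intro n
    have hb : ∀ v ∈ S n, f v ≤ ENNReal.ofReal ((r (n+1)) ^ (-t)) := by
      intro v hv
      apply ENNReal.ofReal_le_ofReal
      apply Real.rpow_le_rpow_of_nonpos (hrpos (n+1)) _ (by linarith)
      simpa [hS, mem_ball_zero_iff, not_lt] using hv.2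
    calc ∫⁻ v in S n, f v ∂volume
        ≤ ∫⁻ _ in S n, ENNReal.ofReal ((r (n+1)) ^ (-t)) ∂volume :=
          setLIntegral_mono measurable_const hb
      _ = ENNReal.ofReal ((r (n+1)) ^ (-t)) * volume (S n) := setLIntegral_const _ _
      _ ≤ ENNReal.ofReal ((r (n+1)) ^ (-t)) * volume (closedBall (0:E) (r n)) := by
          gcongr
          exact diff_subset
      _ = ENNReal.ofReal ((r (n+1)) ^ (-t)) * (ENNReal.ofReal ((r n) ^ 2) * V) := by
          rw [Measure.addHaar_closedBall _ _ (hrpos n).le, finrank_E2]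
      _ = ENNReal.ofReal ((r (n+1)) ^ (-t) * (r n) ^ 2) * V := by
          rw [← mul_assoc, ← ENNReal.ofReal_mul (by positivity)]
      _ = ENNReal.ofReal ((2:ℝ) ^ t * ((2:ℝ) ^ (t - 2)) ^ n) * V := by
          congr 1
          rw [h2 (n+1), h2 n, ← Real.rpow_natCast ((2:ℝ) ^ (-(n:ℝ))) 2,
            ← Real.rpow_mul (by norm_num), ← Real.rpow_mul (by norm_num),
            ← Real.rpow_natCast ((2:ℝ) ^ (t-2)) n, ← Real.rpow_mul (by norm_num),
            ← Real.rpow_add (by norm_num), ← Real.rpow_add (by norm_num)]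
          congr 1
          push_cast
          ring
  calc ∫⁻ v in closedBall (0:E) 1, f v ∂volume
      ≤ (∫⁻ v in ({0}:Set E), f v ∂volume) + ∫⁻ v in ⋃ n, S n, f v ∂volume := step1.trans step2
    _ ≤ 0 + ∑' n, ∫⁻ v in S n, f v ∂volume := by rw [h0]; gcongr
    _ ≤ 0 + ∑' n, ENNReal.ofReal ((2:ℝ) ^ t * ((2:ℝ) ^ (t - 2)) ^ n) * V := by
        gcongr with n; exact hshell n
    _ < ⊤ := by
        rw [zero_add]
        have heq : ∀ n : ℕ, ENNReal.ofReal ((2:ℝ) ^ t * ((2:ℝ) ^ (t - 2)) ^ n) * V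
            = ENNReal.ofReal ((2:ℝ) ^ t) * (ENNReal.ofReal ((2:ℝ) ^ (t-2))) ^ n * V := by
          intro n
          rw [ENNReal.ofReal_mul (by positivity), ENNReal.ofReal_pow (by positivity)]
        simp_rw [heq]
        rw [ENNReal.tsum_mul_right, ENNReal.tsum_mul_left, ENNReal.tsum_geometric]
        have hlt1 : ENNReal.ofReal ((2:ℝ) ^ (t-2)) < 1 := by
          rw [← ENNReal.ofReal_one]
          exact (ENNReal.ofReal_lt_ofReal_iff_of_nonneg (by positivity)).2
            (Real.rpow_lt_one_of_one_lt_of_neg (by norm_num) (by linarith))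
        apply ENNReal.mul_lt_top (ENNReal.mul_lt_top ENNReal.ofReal_lt_top _) hVfin
        rw [ENNReal.inv_lt_top]
        exact tsub_pos_iff_lt.2 hlt1

lemma T_lt_top {s : ℝ} (hs : 2 < s) :
    ∫⁻ v in (closedBall (0 : EuclideanSpace ℝ (Fin 2)) 1)ᶜ,
      ENNReal.ofReal (‖v‖ ^ (-s)) ∂volume < ⊤ := by
  have hb : ∀ v ∈ (closedBall (0 : EuclideanSpace ℝ (Fin 2)) 1)ᶜ,
      ENNReal.ofReal (‖v‖ ^ (-s)) ≤ ENNReal.ofReal ((2:ℝ) ^ s * (1 + ‖v‖) ^ (-s)) := by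
    intro v hv
    have hv1 : (1:ℝ) ≤ ‖v‖ := le_of_lt (by simpa [mem_closedBall_zero_iff, not_le] using hv)
    apply ENNReal.ofReal_le_ofReal
    have h1 : (2 * ‖v‖) ^ (-s) ≤ (1 + ‖v‖) ^ (-s) :=
      Real.rpow_le_rpow_of_nonpos (by linarith) (by linarith) (by linarith)
    have h2 : ‖v‖ ^ (-s) = (2:ℝ) ^ s * (2 * ‖v‖) ^ (-s) := by
      rw [Real.mul_rpow (by norm_num) (by linarith), ← mul_assoc,
        ← Real.rpow_add (by norm_num : (0:ℝ) < 2)]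
      simp
    rw [h2]
    have h3 : (0:ℝ) ≤ (2:ℝ)^s := by positivity
    exact mul_le_mul_of_nonneg_left h1 h3
  calc ∫⁻ v in (closedBall (0 : EuclideanSpace ℝ (Fin 2)) 1)ᶜ,
        ENNReal.ofReal (‖v‖ ^ (-s)) ∂volume
      ≤ ∫⁻ v in (closedBall (0 : EuclideanSpace ℝ (Fin 2)) 1)ᶜ,
        ENNReal.ofReal ((2:ℝ) ^ s * (1 + ‖v‖) ^ (-s)) ∂volume :=
        setLIntegral_mono (by fun_prop) hb
    _ ≤ ∫⁻ v, ENNReal.ofReal ((2:ℝ) ^ s * (1 + ‖v‖) ^ (-s)) ∂volume :=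
        setLIntegral_le_lintegral _ _
    _ = ENNReal.ofReal ((2:ℝ) ^ s) * ∫⁻ v, ENNReal.ofReal ((1 + ‖v‖) ^ (-s)) ∂volume := by
        simp_rw [ENNReal.ofReal_mul (by positivity : (0:ℝ) ≤ (2:ℝ)^s)]
        rw [lintegral_const_mul _ (by fun_prop)]
    _ < ⊤ := by
        apply ENNReal.mul_lt_top ENNReal.ofReal_lt_top
        apply finite_integral_one_add_norm
        rw [finrank_euclideanSpace]
        simpa using hs

lemma pyth {E : Type*} [NormedAddCommGroup E] [InnerProductSpace ℝ E] (K : Submodule ℝ E)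
    [K.HasOrthogonalProjection] (x : E) :
    ‖x‖ ^ 2 = ‖(Submodule.orthogonalProjectionOnto K x : E)‖ ^ 2 + ‖x - (Submodule.orthogonalProjectionOnto K x : E)‖ ^ 2 := by
  have h0 : (inner ℝ (Submodule.orthogonalProjectionOnto K x : E) (x - (Submodule.orthogonalProjectionOnto K x : E)) : ℝ) = 0 :=
    Submodule.inner_right_of_mem_orthogonal (Submodule.orthogonalProjectionOnto K x).2
      (K.sub_starProjection_mem_orthogonal x)
  have hx : x = (Submodule.orthogonalProjectionOnto K x : E) + (x - (Submodule.orthogonalProjectionOnto K x : E)) := by abel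
  calc ‖x‖ ^ 2 = ‖(Submodule.orthogonalProjectionOnto K x : E) + (x - (Submodule.orthogonalProjectionOnto K x : E))‖ ^ 2 := by
        rw [← hx]
    _ = _ := by rw [norm_add_sq_real, h0]; ring

lemma sq_le_imp_le {x y : ℝ} (hx : 0 ≤ x) (hy : 0 ≤ y) (h : x ^ 2 ≤ y ^ 2) : x ≤ y := by
  nlinarith

lemma proj_norm_le {E : Type*} [NormedAddCommGroup E] [InnerProductSpace ℝ E] (K : Submodule ℝ E)
    [K.HasOrthogonalProjection] (x : E) : ‖(Submodule.orthogonalProjectionOnto K x : E)‖ ≤ ‖x‖ := by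
  have h := pyth K x
  nlinarith [norm_nonneg x, norm_nonneg (Submodule.orthogonalProjectionOnto K x : E),
    sq_nonneg ‖x - (Submodule.orthogonalProjectionOnto K x : E)‖]

end PlaneKernelAux

set_option maxHeartbeats 2000000 in
/-- Lemma (plane case): uniform bound on the surface integral over a 2-dimensional
affine plane in ℝ³ of `|ξ-η|^{-a} |η|^{-b}`. -/
theorem plane_kernel_bound (a b : ℝ) (ha : 0 < a) (ha2 : a < 2)
    (hb : 0 < b) (hb2 : b < 2) (hab : 2 < a + b) :
    ∃ C : ℝ, 0 < C ∧
      ∀ (P : AffineSubspace ℝ (EuclideanSpace ℝ (Fin 3))),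
        Module.finrank ℝ P.direction = 2 →
        ∀ ξ : EuclideanSpace ℝ (Fin 3), ξ ≠ 0 →
          ∫⁻ η in (P : Set (EuclideanSpace ℝ (Fin 3))),
              ENNReal.ofReal (‖ξ - η‖ ^ (-a) * ‖η‖ ^ (-b)) ∂(μH[2]) ≤
            ENNReal.ofReal (C * ‖ξ‖ ^ (-(a + b - 2))) := by
  classical
  -- abbreviations
  set E₂ := EuclideanSpace ℝ (Fin 2)
  set E₃ := EuclideanSpace ℝ (Fin 3)
  -- Hausdorff measure on ℝ² is a Haar measure, hence a multiple of volume
  haveI hHaar : (μH[(2:ℝ)] : Measure E₂).IsAddHaarMeasure := by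
    have h2fr : (2:ℝ) = ((Module.finrank ℝ E₂ : ℕ) : ℝ) := by
      simp [E₂, finrank_euclideanSpace]
    rw [h2fr]
    infer_instance
  set c₀ : ℝ≥0 := Measure.addHaarScalarFactor (μH[(2:ℝ)] : Measure E₂) volume with hc₀
  have hμ2 : (μH[(2:ℝ)] : Measure E₂) = c₀ • volume :=
    Measure.isAddLeftInvariant_eq_smul _ _
  -- constants
  set JA : ℝ≥0∞ := ∫⁻ v in closedBall (0:E₂) 1, ENNReal.ofReal (‖v‖ ^ (-a)) ∂volume with hJA
  set JB : ℝ≥0∞ := ∫⁻ v in closedBall (0:E₂) 1, ENNReal.ofReal (‖v‖ ^ (-b)) ∂volume with hJB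
  set JT : ℝ≥0∞ := ∫⁻ v in (closedBall (0:E₂) 1)ᶜ, ENNReal.ofReal (‖v‖ ^ (-(a+b))) ∂volume with hJT
  have hJAfin : JA < ⊤ := J_lt_top ha ha2
  have hJBfin : JB < ⊤ := J_lt_top hb hb2
  have hJTfin : JT < ⊤ := T_lt_top hab
  set V1 : ℝ≥0∞ := volume (ball (0:E₂) 1) with hV1
  have hV1fin : V1 < ⊤ := measure_ball_lt_top
  set Kbig : ℝ≥0∞ := JA + JB +
    ENNReal.ofReal ((6:ℝ) ^ a * (2:ℝ) ^ (a + b - 2)) * (V1 + JT) with hKbig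
  have hKbigfin : Kbig ≠ ⊤ := by
    rw [hKbig]
    exact ENNReal.add_ne_top.2 ⟨ENNReal.add_ne_top.2 ⟨hJAfin.ne, hJBfin.ne⟩,
      (ENNReal.mul_lt_top ENNReal.ofReal_lt_top
        (ENNReal.add_lt_top.2 ⟨hV1fin, hJTfin⟩)).ne⟩
  set Ktot : ℝ≥0∞ := (c₀ : ℝ≥0∞) * Kbig * ENNReal.ofReal ((2:ℝ) ^ (a + b - 2)) with hKtot
  have hKtotfin : Ktot ≠ ⊤ := by
    rw [hKtot]
    exact (ENNReal.mul_lt_top (ENNReal.mul_lt_top ENNReal.coe_lt_top hKbigfin.lt_top)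
      ENNReal.ofReal_lt_top).ne
  refine ⟨Ktot.toReal + 1, by positivity, ?_⟩
  intro P hP2 ξ hξ
  -- the plane is nonempty
  have hPne : ((P : Set E₃)).Nonempty := by
    by_contra hne
    have hbot : P = ⊥ := (AffineSubspace.coe_eq_bot_iff P).mp (Set.not_nonempty_iff_eq_empty.1 hne)
    rw [hbot, AffineSubspace.direction_bot] at hP2
    simp at hP2
  obtain ⟨p, hp⟩ := hPne
  set V : Submodule ℝ E₃ := P.direction with hVdef
  set B : OrthonormalBasis (Fin 2) ℝ V := (stdOrthonormalBasis ℝ V).reindex (finCongr hP2) with hB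
  set L : E₂ ≃ₗᵢ[ℝ] V := B.repr.symm with hL
  set e : E₂ → E₃ := fun w => p + (L w : E₃) with he
  have hiso : Isometry e := by
    apply Isometry.of_dist_eq
    intro w₁ w₂
    simp only [he]
    rw [dist_add_left, ← Subtype.dist_eq, LinearIsometryEquiv.dist_map]
  have hrange : Set.range e = (P : Set E₃) := by
    ext x
    constructor
    · rintro ⟨w, rfl⟩
      have hmem : (L w : E₃) ∈ P.direction := (L w).2
      simpa [he, add_comm] using AffineSubspace.vadd_mem_of_mem_direction hmem hp
    · intro hx
      have hdir : x - p ∈ P.direction := AffineSubspace.vsub_mem_direction hx hp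
      refine ⟨L.symm ⟨x - p, hdir⟩, ?_⟩
      simp only [he, LinearIsometryEquiv.apply_symm_apply]
      abel
  -- projection geometry
  set d : ℝ := ‖p - ((Submodule.orthogonalProjectionOnto V p : V) : E₃)‖ with hd
  have hd0 : 0 ≤ d := norm_nonneg _
  set c1 : E₂ := -(L.symm (Submodule.orthogonalProjectionOnto V p)) with hc1
  set w1 : E₂ := L.symm (Submodule.orthogonalProjectionOnto V (ξ - p)) with hw1
  have hLc1 : ∀ w : E₂, ((L (w - c1) : V) : E₃)
      = ((Submodule.orthogonalProjectionOnto V p : V) : E₃) + (L w : E₃) := by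
    intro w
    have hwc : w - c1 = L.symm (Submodule.orthogonalProjectionOnto V p) + w := by
      rw [hc1, sub_neg_eq_add, add_comm]
    rw [hwc, map_add, LinearIsometryEquiv.apply_symm_apply, Submodule.coe_add]
  have hpre : ∀ w : E₂, ((Submodule.orthogonalProjectionOnto V (e w) : V) : E₃) = ((L (w - c1) : V) : E₃) := by
    intro w
    simp only [he]
    rw [map_add, Submodule.orthogonalProjectionOnto_mem_subspace_eq_self (L w), Submodule.coe_add, hLc1 w]
  have hprnorm : ∀ w : E₂, ‖((Submodule.orthogonalProjectionOnto V (e w) : V) : E₃)‖ = ‖w - c1‖ := by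
    intro w
    rw [hpre w]
    calc ‖((L (w - c1) : V) : E₃)‖ = ‖L (w - c1)‖ := rfl
      _ = ‖w - c1‖ := L.norm_map _
  have hperp : ∀ w : E₂, e w - ((Submodule.orthogonalProjectionOnto V (e w) : V) : E₃)
      = p - ((Submodule.orthogonalProjectionOnto V p : V) : E₃) := by
    intro w
    rw [hpre w, hLc1 w]
    simp only [he]
    abel
  have hF2 : ∀ w : E₂, ‖e w‖ ^ 2 = ‖w - c1‖ ^ 2 + d ^ 2 := by
    intro w
    have hth := pyth V (e w)
    rw [hprnorm w, hperp w] at hth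
    rw [hd]
    exact hth
  have hF1 : ∀ w : E₂, ‖w - c1‖ ≤ ‖e w‖ := fun w =>
    sq_le_imp_le (norm_nonneg _) (norm_nonneg _) (by nlinarith [hF2 w, sq_nonneg d])
  have hdle : ∀ w : E₂, d ≤ ‖e w‖ := fun w =>
    sq_le_imp_le hd0 (norm_nonneg _) (by nlinarith [hF2 w, sq_nonneg ‖w - c1‖])
  have hxi_e : ∀ w : E₂, ξ - e w = (ξ - p) - (L w : E₃) := by
    intro w
    simp only [he]
    abel
  have hF3 : ∀ w : E₂, ‖w - w1‖ ≤ ‖ξ - e w‖ := by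
    intro w
    have h1 : ((Submodule.orthogonalProjectionOnto V (ξ - e w) : V) : E₃) = ((L (w1 - w) : V) : E₃) := by
      rw [hxi_e w, map_sub, Submodule.orthogonalProjectionOnto_mem_subspace_eq_self (L w),
        map_sub L w1 w, hw1, LinearIsometryEquiv.apply_symm_apply]
    calc ‖w - w1‖ = ‖w1 - w‖ := norm_sub_rev _ _
      _ = ‖L (w1 - w)‖ := (L.norm_map _).symm
      _ = ‖((Submodule.orthogonalProjectionOnto V (ξ - e w) : V) : E₃)‖ := by rw [h1]; rfl
      _ ≤ ‖ξ - e w‖ := proj_norm_le V _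
  -- measure reduction to ℝ²
  set F : E₃ → ℝ≥0∞ := fun η => ENNReal.ofReal (‖ξ - η‖ ^ (-a) * ‖η‖ ^ (-b)) with hF
  have hFm : Measurable F := by fun_prop
  have hred : ∫⁻ η in (P : Set E₃), F η ∂(μH[2])
      = (c₀ : ℝ≥0∞) * ∫⁻ w, F (e w) ∂(volume : Measure E₂) := by
    rw [← hrange, ← hiso.map_hausdorffMeasure (Or.inl (by norm_num)),
      lintegral_map hFm hiso.continuous.measurable, hμ2, ENNReal.smul_def,
      lintegral_smul_measure, smul_eq_mul]
  -- main estimate over ℝ²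
  set R : ℝ := ‖ξ‖ / 2 with hRdef
  have hxip : 0 < ‖ξ‖ := norm_pos_iff.2 hξ
  have hRpos : 0 < R := by rw [hRdef]; positivity
  have hxiR : ‖ξ‖ = 2 * R := by rw [hRdef]; ring
  -- pointwise bounds
  have hA : ∀ w : E₂, w ≠ c1 → ‖e w‖ ≤ R →
      F (e w) ≤ ENNReal.ofReal (R ^ (-a)) *
        (closedBall c1 R).indicator (fun w => ENNReal.ofReal (‖w - c1‖ ^ (-b))) w := by
    intro w hw hle
    have hwc : 0 < ‖w - c1‖ := by rw [norm_pos_iff, sub_ne_zero]; exact hw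
    have hmem : w ∈ closedBall c1 R := by
      rw [mem_closedBall, dist_eq_norm]; exact (hF1 w).trans hle
    rw [indicator_of_mem hmem, ← ENNReal.ofReal_mul (by positivity)]
    apply ENNReal.ofReal_le_ofReal
    have h1 : ‖ξ - e w‖ ^ (-a) ≤ R ^ (-a) := by
      apply Real.rpow_le_rpow_of_nonpos hRpos _ (by linarith)
      have htri := norm_sub_norm_le ξ (e w)
      linarith
    have h2 : ‖e w‖ ^ (-b) ≤ ‖w - c1‖ ^ (-b) :=
      Real.rpow_le_rpow_of_nonpos hwc (hF1 w) (by linarith)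
    exact mul_le_mul h1 h2 (Real.rpow_nonneg (norm_nonneg _) _) (by positivity)
  have hB2 : ∀ w : E₂, w ≠ w1 → R < ‖e w‖ → ‖ξ - e w‖ ≤ R →
      F (e w) ≤ ENNReal.ofReal (R ^ (-b)) *
        (closedBall w1 R).indicator (fun w => ENNReal.ofReal (‖w - w1‖ ^ (-a))) w := by
    intro w hw h1 h2
    have hwc : 0 < ‖w - w1‖ := by rw [norm_pos_iff, sub_ne_zero]; exact hw
    have hmem : w ∈ closedBall w1 R := by
      rw [mem_closedBall, dist_eq_norm]; exact (hF3 w).trans h2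
    rw [indicator_of_mem hmem, ← ENNReal.ofReal_mul (by positivity)]
    apply ENNReal.ofReal_le_ofReal
    have ha1 : ‖ξ - e w‖ ^ (-a) ≤ ‖w - w1‖ ^ (-a) :=
      Real.rpow_le_rpow_of_nonpos hwc (hF3 w) (by linarith)
    have hb1 : ‖e w‖ ^ (-b) ≤ R ^ (-b) :=
      Real.rpow_le_rpow_of_nonpos hRpos h1.le (by linarith)
    calc ‖ξ - e w‖ ^ (-a) * ‖e w‖ ^ (-b)
        ≤ ‖w - w1‖ ^ (-a) * R ^ (-b) :=
          mul_le_mul ha1 hb1 (Real.rpow_nonneg (norm_nonneg _) _)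
            (Real.rpow_nonneg (norm_nonneg _) _)
      _ = R ^ (-b) * ‖w - w1‖ ^ (-a) := mul_comm _ _
  have hC6 : ∀ w : E₂, R < ‖e w‖ → R < ‖ξ - e w‖ →
      ‖ξ - e w‖ ^ (-a) * ‖e w‖ ^ (-b) ≤ (6:ℝ) ^ a * ‖e w‖ ^ (-(a+b)) := by
    intro w h1 h2
    have hepos : 0 < ‖e w‖ := hRpos.trans h1
    have h6 : ‖e w‖ / 6 ≤ ‖ξ - e w‖ := by
      rcases le_or_gt ‖e w‖ (6 * R) with h | h
      · linarith
      · have htri := norm_sub_norm_le (e w) ξ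
        rw [norm_sub_rev] at htri
        linarith
    have h7 : ‖ξ - e w‖ ^ (-a) ≤ (‖e w‖ / 6) ^ (-a) :=
      Real.rpow_le_rpow_of_nonpos (by positivity) h6 (by linarith)
    have h8 : (‖e w‖ / 6) ^ (-a) = (6:ℝ) ^ a * ‖e w‖ ^ (-a) := by
      rw [Real.div_rpow (norm_nonneg _) (by norm_num : (0:ℝ) ≤ 6), div_eq_mul_inv,
        Real.rpow_neg (by norm_num : (0:ℝ) ≤ 6), inv_inv, mul_comm]
    calc ‖ξ - e w‖ ^ (-a) * ‖e w‖ ^ (-b)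
        ≤ (‖e w‖ / 6) ^ (-a) * ‖e w‖ ^ (-b) :=
          mul_le_mul_of_nonneg_right h7 (Real.rpow_nonneg (norm_nonneg _) _)
      _ = (6:ℝ) ^ a * (‖e w‖ ^ (-a) * ‖e w‖ ^ (-b)) := by rw [h8]; ring
      _ = (6:ℝ) ^ a * ‖e w‖ ^ (-(a+b)) := by
          have hexp : -a + -b = -(a+b) := by ring
          rw [← Real.rpow_add hepos, hexp]
  -- null exceptional set
  have hae : ∀ᵐ w ∂(volume : Measure E₂), w ∉ ({c1, w1} : Set E₂) := by
    have hnull : (volume : Measure E₂) ({c1, w1} : Set E₂) = 0 :=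
      Set.Finite.measure_zero (Set.toFinite _) _
    rw [← compl_mem_ae_iff] at hnull
    exact hnull
  have hm1 : Measurable (fun w : E₂ => ENNReal.ofReal (R ^ (-a)) *
      (closedBall c1 R).indicator (fun w => ENNReal.ofReal (‖w - c1‖ ^ (-b))) w) :=
    measurable_const.mul (Measurable.indicator (by fun_prop) measurableSet_closedBall)
  have hm2 : Measurable (fun w : E₂ => ENNReal.ofReal (R ^ (-b)) *
      (closedBall w1 R).indicator (fun w => ENNReal.ofReal (‖w - w1‖ ^ (-a))) w) :=
    measurable_const.mul (Measurable.indicator (by fun_prop) measurableSet_closedBall)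
  -- integral bounds for the first two pieces
  have hI1 : ∫⁻ w, ENNReal.ofReal (R ^ (-a)) *
        (closedBall c1 R).indicator (fun w => ENNReal.ofReal (‖w - c1‖ ^ (-b))) w
        ∂(volume : Measure E₂)
      ≤ JB * ENNReal.ofReal (R ^ (2 - (a+b))) := by
    rw [lintegral_const_mul _ ((by fun_prop : Measurable fun w : E₂ =>
        ENNReal.ofReal (‖w - c1‖ ^ (-b))).indicator measurableSet_closedBall),
      lintegral_indicator measurableSet_closedBall, ballBound hRpos c1, ← hJB,
      ← mul_assoc, ← ENNReal.ofReal_mul (by positivity), mul_comm _ JB]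
    apply le_of_eq
    congr 2
    rw [← Real.rpow_add hRpos]
    congr 1
    ring
  have hI2 : ∫⁻ w, ENNReal.ofReal (R ^ (-b)) *
        (closedBall w1 R).indicator (fun w => ENNReal.ofReal (‖w - w1‖ ^ (-a))) w
        ∂(volume : Measure E₂)
      ≤ JA * ENNReal.ofReal (R ^ (2 - (a+b))) := by
    rw [lintegral_const_mul _ ((by fun_prop : Measurable fun w : E₂ =>
        ENNReal.ofReal (‖w - w1‖ ^ (-a))).indicator measurableSet_closedBall),
      lintegral_indicator measurableSet_closedBall, ballBound hRpos w1, ← hJA,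
      ← mul_assoc, ← ENNReal.ofReal_mul (by positivity), mul_comm _ JA]
    apply le_of_eq
    congr 2
    rw [← Real.rpow_add hRpos]
    congr 1
    ring
  have hhalf : ENNReal.ofReal ((R/2) ^ (2 - (a+b)))
      = ENNReal.ofReal ((2:ℝ) ^ (a + b - 2)) * ENNReal.ofReal (R ^ (2 - (a+b))) := by
    rw [← ENNReal.ofReal_mul (by positivity)]
    congr 1
    rw [Real.div_rpow hRpos.le (by norm_num : (0:ℝ) ≤ 2), div_eq_mul_inv,
      ← Real.rpow_neg (by norm_num : (0:ℝ) ≤ 2)]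
    have hexp : -(2 - (a+b)) = a + b - 2 := by ring
    rw [hexp, mul_comm]
  have hmain : ∫⁻ w, F (e w) ∂(volume : Measure E₂)
      ≤ Kbig * ENNReal.ofReal (R ^ (2 - (a+b))) := by
    rcases le_or_gt (R/2) d with hdc | hdc
    · -- the plane is far from the origin
      have hdpos : 0 < d := lt_of_lt_of_le (by positivity) hdc
      have hpt : ∀ w ∉ ({c1, w1} : Set E₂), F (e w) ≤
          (ENNReal.ofReal (R ^ (-a)) *
            (closedBall c1 R).indicator (fun w => ENNReal.ofReal (‖w - c1‖ ^ (-b))) w)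
          + (ENNReal.ofReal (R ^ (-b)) *
            (closedBall w1 R).indicator (fun w => ENNReal.ofReal (‖w - w1‖ ^ (-a))) w)
          + ENNReal.ofReal ((6:ℝ) ^ a) *
              ENNReal.ofReal ((max d ‖w - c1‖) ^ (-(a+b))) := by
        intro w hw
        simp only [mem_insert_iff, mem_singleton_iff, not_or] at hw
        obtain ⟨hwc1, hww1⟩ := hw
        rcases le_or_gt ‖e w‖ R with h1 | h1
        · exact le_trans (hA w hwc1 h1) (le_trans le_self_add le_self_add)
        rcases le_or_gt ‖ξ - e w‖ R with h2 | h2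
        · exact le_trans (hB2 w hww1 h1 h2) (le_trans le_add_self le_self_add)
        · refine le_trans ?_ le_add_self
          rw [← ENNReal.ofReal_mul (by positivity)]
          apply ENNReal.ofReal_le_ofReal
          refine le_trans (hC6 w h1 h2) ?_
          apply mul_le_mul_of_nonneg_left _ (by positivity)
          apply Real.rpow_le_rpow_of_nonpos (lt_max_of_lt_left hdpos)
            (max_le (hdle w) (hF1 w)) (by linarith)
      have hI3 : ∫⁻ w, ENNReal.ofReal ((6:ℝ) ^ a) *
            ENNReal.ofReal ((max d ‖w - c1‖) ^ (-(a+b))) ∂(volume : Measure E₂)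
          ≤ ENNReal.ofReal ((6:ℝ) ^ a) * ((V1 + JT) * ENNReal.ofReal ((R/2) ^ (2 - (a+b)))) := by
        rw [lintegral_const_mul _ (by fun_prop)]
        apply mul_le_mul_of_nonneg_left _ zero_le
        have hsplit := (lintegral_add_compl (μ := (volume : Measure E₂))
          (fun w : E₂ => ENNReal.ofReal ((max d ‖w - c1‖) ^ (-(a+b))))
          (measurableSet_closedBall (x := c1) (ε := d))).symm
        rw [hsplit]
        have hin : ∫⁻ w in closedBall c1 d,
            ENNReal.ofReal ((max d ‖w - c1‖) ^ (-(a+b))) ∂(volume : Measure E₂)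
            ≤ V1 * ENNReal.ofReal (d ^ (2 - (a+b))) := by
          calc ∫⁻ w in closedBall c1 d,
              ENNReal.ofReal ((max d ‖w - c1‖) ^ (-(a+b))) ∂(volume : Measure E₂)
              ≤ ∫⁻ _ in closedBall c1 d,
                ENNReal.ofReal (d ^ (-(a+b))) ∂(volume : Measure E₂) := by
                apply setLIntegral_mono measurable_const
                intro w _
                apply ENNReal.ofReal_le_ofReal
                exact Real.rpow_le_rpow_of_nonpos hdpos (le_max_left _ _) (by linarith)
            _ = ENNReal.ofReal (d ^ (-(a+b))) * volume (closedBall c1 d) :=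
                setLIntegral_const _ _
            _ = ENNReal.ofReal (d ^ (-(a+b))) * (ENNReal.ofReal (d ^ 2) * V1) := by
                rw [Measure.addHaar_closedBall _ _ hd0, finrank_E2, hV1]
            _ = V1 * ENNReal.ofReal (d ^ (2 - (a+b))) := by
                rw [← mul_assoc, ← ENNReal.ofReal_mul (by positivity), mul_comm]
                congr 2
                rw [← Real.rpow_natCast d 2, ← Real.rpow_add hdpos]
                norm_num
                congr 1
                ring
        have hout : ∫⁻ w in (closedBall c1 d)ᶜ,
            ENNReal.ofReal ((max d ‖w - c1‖) ^ (-(a+b))) ∂(volume : Measure E₂)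
            ≤ JT * ENNReal.ofReal (d ^ (2 - (a+b))) := by
          have heq : ∀ w ∈ (closedBall c1 d)ᶜ,
              ENNReal.ofReal ((max d ‖w - c1‖) ^ (-(a+b)))
                ≤ ENNReal.ofReal (‖w - c1‖ ^ (-(a+b))) := by
            intro w hw
            have hgt : d < ‖w - c1‖ := by
              have := hw
              rw [mem_compl_iff, mem_closedBall, not_le, dist_eq_norm] at this
              exact this
            rw [max_eq_right hgt.le]
          calc ∫⁻ w in (closedBall c1 d)ᶜ,
              ENNReal.ofReal ((max d ‖w - c1‖) ^ (-(a+b))) ∂(volume : Measure E₂)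
              ≤ ∫⁻ w in (closedBall c1 d)ᶜ,
                ENNReal.ofReal (‖w - c1‖ ^ (-(a+b))) ∂(volume : Measure E₂) :=
                setLIntegral_mono (by fun_prop) heq
            _ = ENNReal.ofReal (d ^ (2 - (a+b))) * JT := by
                rw [tailBound hdpos c1, ← hJT]
            _ = JT * ENNReal.ofReal (d ^ (2 - (a+b))) := mul_comm _ _
        have hdR : ENNReal.ofReal (d ^ (2 - (a+b)))
            ≤ ENNReal.ofReal ((R/2) ^ (2 - (a+b))) := by
          apply ENNReal.ofReal_le_ofReal
          exact Real.rpow_le_rpow_of_nonpos (by positivity) hdc (by linarith)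
        calc (∫⁻ w in closedBall c1 d,
              ENNReal.ofReal ((max d ‖w - c1‖) ^ (-(a+b))) ∂(volume : Measure E₂))
            + ∫⁻ w in (closedBall c1 d)ᶜ,
              ENNReal.ofReal ((max d ‖w - c1‖) ^ (-(a+b))) ∂(volume : Measure E₂)
            ≤ V1 * ENNReal.ofReal (d ^ (2 - (a+b))) + JT * ENNReal.ofReal (d ^ (2 - (a+b))) :=
              add_le_add hin hout
          _ = (V1 + JT) * ENNReal.ofReal (d ^ (2 - (a+b))) := by ring
          _ ≤ (V1 + JT) * ENNReal.ofReal ((R/2) ^ (2 - (a+b))) := by gcongr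
      calc ∫⁻ w, F (e w) ∂(volume : Measure E₂)
          ≤ ∫⁻ w, ((ENNReal.ofReal (R ^ (-a)) *
              (closedBall c1 R).indicator (fun w => ENNReal.ofReal (‖w - c1‖ ^ (-b))) w)
            + (ENNReal.ofReal (R ^ (-b)) *
              (closedBall w1 R).indicator (fun w => ENNReal.ofReal (‖w - w1‖ ^ (-a))) w)
            + ENNReal.ofReal ((6:ℝ) ^ a) *
                ENNReal.ofReal ((max d ‖w - c1‖) ^ (-(a+b)))) ∂(volume : Measure E₂) :=
            lintegral_mono_ae (hae.mono fun w hw => hpt w hw)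
        _ = (∫⁻ w, (ENNReal.ofReal (R ^ (-a)) *
              (closedBall c1 R).indicator (fun w => ENNReal.ofReal (‖w - c1‖ ^ (-b))) w)
              ∂(volume : Measure E₂))
            + (∫⁻ w, (ENNReal.ofReal (R ^ (-b)) *
              (closedBall w1 R).indicator (fun w => ENNReal.ofReal (‖w - w1‖ ^ (-a))) w)
              ∂(volume : Measure E₂))
            + ∫⁻ w, ENNReal.ofReal ((6:ℝ) ^ a) *
                ENNReal.ofReal ((max d ‖w - c1‖) ^ (-(a+b))) ∂(volume : Measure E₂) := by
            rw [lintegral_add_left (hm1.add hm2 : Measurable fun w => _ + _), lintegral_add_left hm1]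
        _ ≤ JB * ENNReal.ofReal (R ^ (2 - (a+b))) + JA * ENNReal.ofReal (R ^ (2 - (a+b)))
            + ENNReal.ofReal ((6:ℝ) ^ a) *
              ((V1 + JT) * ENNReal.ofReal ((R/2) ^ (2 - (a+b)))) :=
            add_le_add (add_le_add hI1 hI2) hI3
        _ ≤ Kbig * ENNReal.ofReal (R ^ (2 - (a+b))) := by
            apply le_of_eq
            rw [hhalf, hKbig, ENNReal.ofReal_mul (by positivity)]
            ring
    · -- the plane is close to the origin
      have hpt : ∀ w ∉ ({c1, w1} : Set E₂), F (e w) ≤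
          (ENNReal.ofReal (R ^ (-a)) *
            (closedBall c1 R).indicator (fun w => ENNReal.ofReal (‖w - c1‖ ^ (-b))) w)
          + (ENNReal.ofReal (R ^ (-b)) *
            (closedBall w1 R).indicator (fun w => ENNReal.ofReal (‖w - w1‖ ^ (-a))) w)
          + ENNReal.ofReal ((6:ℝ) ^ a) *
              ((closedBall c1 (R/2))ᶜ).indicator
                (fun w => ENNReal.ofReal (‖w - c1‖ ^ (-(a+b)))) w := by
        intro w hw
        simp only [mem_insert_iff, mem_singleton_iff, not_or] at hw
        obtain ⟨hwc1, hww1⟩ := hw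
        rcases le_or_gt ‖e w‖ R with h1 | h1
        · exact le_trans (hA w hwc1 h1) (le_trans le_self_add le_self_add)
        rcases le_or_gt ‖ξ - e w‖ R with h2 | h2
        · exact le_trans (hB2 w hww1 h1 h2) (le_trans le_add_self le_self_add)
        · refine le_trans ?_ le_add_self
          have hfar : R/2 < ‖w - c1‖ := by
            have h3 := hF2 w
            nlinarith [norm_nonneg (w - c1), hRpos]
          have hmem : w ∈ (closedBall c1 (R/2))ᶜ := by
            simp [mem_closedBall, dist_eq_norm, not_le]
            exact hfar
          rw [indicator_of_mem hmem, ← ENNReal.ofReal_mul (by positivity)]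
          apply ENNReal.ofReal_le_ofReal
          refine le_trans (hC6 w h1 h2) ?_
          apply mul_le_mul_of_nonneg_left _ (by positivity)
          exact Real.rpow_le_rpow_of_nonpos (lt_trans (by positivity) hfar)
            (hF1 w) (by linarith)
      have hI3 : ∫⁻ w, ENNReal.ofReal ((6:ℝ) ^ a) *
            ((closedBall c1 (R/2))ᶜ).indicator
              (fun w => ENNReal.ofReal (‖w - c1‖ ^ (-(a+b)))) w ∂(volume : Measure E₂)
          ≤ ENNReal.ofReal ((6:ℝ) ^ a) * ((V1 + JT) * ENNReal.ofReal ((R/2) ^ (2 - (a+b)))) := by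
        rw [lintegral_const_mul _ ((by fun_prop : Measurable fun w : E₂ =>
            ENNReal.ofReal (‖w - c1‖ ^ (-(a+b)))).indicator measurableSet_closedBall.compl),
          lintegral_indicator measurableSet_closedBall.compl,
          tailBound (by positivity : (0:ℝ) < R/2) c1, ← hJT]
        apply mul_le_mul_of_nonneg_left _ zero_le
        rw [mul_comm]
        exact mul_le_mul_of_nonneg_right le_add_self zero_le
      calc ∫⁻ w, F (e w) ∂(volume : Measure E₂)
          ≤ ∫⁻ w, ((ENNReal.ofReal (R ^ (-a)) *
              (closedBall c1 R).indicator (fun w => ENNReal.ofReal (‖w - c1‖ ^ (-b))) w)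
            + (ENNReal.ofReal (R ^ (-b)) *
              (closedBall w1 R).indicator (fun w => ENNReal.ofReal (‖w - w1‖ ^ (-a))) w)
            + ENNReal.ofReal ((6:ℝ) ^ a) *
                ((closedBall c1 (R/2))ᶜ).indicator
                  (fun w => ENNReal.ofReal (‖w - c1‖ ^ (-(a+b)))) w) ∂(volume : Measure E₂) :=
            lintegral_mono_ae (hae.mono fun w hw => hpt w hw)
        _ = (∫⁻ w, (ENNReal.ofReal (R ^ (-a)) *
              (closedBall c1 R).indicator (fun w => ENNReal.ofReal (‖w - c1‖ ^ (-b))) w)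
              ∂(volume : Measure E₂))
            + (∫⁻ w, (ENNReal.ofReal (R ^ (-b)) *
              (closedBall w1 R).indicator (fun w => ENNReal.ofReal (‖w - w1‖ ^ (-a))) w)
              ∂(volume : Measure E₂))
            + ∫⁻ w, ENNReal.ofReal ((6:ℝ) ^ a) *
                ((closedBall c1 (R/2))ᶜ).indicator
                  (fun w => ENNReal.ofReal (‖w - c1‖ ^ (-(a+b)))) w ∂(volume : Measure E₂) := by
            rw [lintegral_add_left (hm1.add hm2 : Measurable fun w => _ + _), lintegral_add_left hm1]
        _ ≤ JB * ENNReal.ofReal (R ^ (2 - (a+b))) + JA * ENNReal.ofReal (R ^ (2 - (a+b)))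
            + ENNReal.ofReal ((6:ℝ) ^ a) *
              ((V1 + JT) * ENNReal.ofReal ((R/2) ^ (2 - (a+b)))) :=
            add_le_add (add_le_add hI1 hI2) hI3
        _ ≤ Kbig * ENNReal.ofReal (R ^ (2 - (a+b))) := by
            apply le_of_eq
            rw [hhalf, hKbig, ENNReal.ofReal_mul (by positivity)]
            ring
  -- conclusion
  have hRxi : ENNReal.ofReal (R ^ (2 - (a+b)))
      = ENNReal.ofReal ((2:ℝ) ^ (a + b - 2)) * ENNReal.ofReal (‖ξ‖ ^ (2 - (a+b))) := by
    rw [← ENNReal.ofReal_mul (by positivity)]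
    congr 1
    rw [hRdef, Real.div_rpow (norm_nonneg _) (by norm_num : (0:ℝ) ≤ 2), div_eq_mul_inv,
      ← Real.rpow_neg (by norm_num : (0:ℝ) ≤ 2)]
    have hexp : -(2 - (a+b)) = a + b - 2 := by ring
    rw [hexp, mul_comm]
  calc ∫⁻ η in (P : Set E₃), F η ∂(μH[2])
      = (c₀ : ℝ≥0∞) * ∫⁻ w, F (e w) ∂(volume : Measure E₂) := hred
    _ ≤ (c₀ : ℝ≥0∞) * (Kbig * ENNReal.ofReal (R ^ (2 - (a+b)))) := by gcongr
    _ = Ktot * ENNReal.ofReal (‖ξ‖ ^ (2 - (a+b))) := by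
        rw [hRxi, hKtot]
        ring
    _ ≤ ENNReal.ofReal (Ktot.toReal + 1) * ENNReal.ofReal (‖ξ‖ ^ (2 - (a+b))) := by
        gcongr
        conv_lhs => rw [← ENNReal.ofReal_toReal hKtotfin]
        exact ENNReal.ofReal_le_ofReal (by linarith)
    _ = ENNReal.ofReal ((Ktot.toReal + 1) * ‖ξ‖ ^ (-(a + b - 2))) := by
        rw [← ENNReal.ofReal_mul (by positivity)]
        congr 2
        ring
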